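/- Let P be a two-color grid poset with the max property and let L := J_color(P). Suppose L is M-structured for M = [[2,0],[0,2]]. Write (a,b) := wt(max). Then a ≥ 0 and b ≥ 0, the polynomial RGF(L,q) is symmetric and unimodal, and RGF(L,q)·(1−q)·(1−q) = (1−q^{a+1})(1−q^{b+1}) in ℤ[q]. -/

import Mathlib

open scoped Classical

structure GridData (P : Type) [PartialOrder P] where
  m : ℕ
  chain : P → ℕ
  color : P → Fin 2

def IsIdeal {P : Type} [PartialOrder P] (t : Finset P) : Prop :=
  ∀ ⦃x⦄, x ∈ t → ∀ ⦃y⦄, y ≤ x → y ∈ t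

namespace GridData

variable {P : Type} [PartialOrder P] [Fintype P]

/-- The defining properties of a grid poset. -/
def IsGridPoset (G : GridData P) : Prop :=
  1 ≤ G.m ∧
  (∀ u : P, G.chain u ∈ Finset.Icc 1 G.m) ∧
  (∀ i ∈ Finset.Icc 1 G.m, ∃ u : P, G.chain u = i) ∧
  (∀ u v : P, G.chain u = G.chain v → u ≤ v ∨ v ≤ u) ∧
  (∀ u v : P, u ⋖ v → G.chain u = G.chain v ∨ G.chain u = G.chain v + 1)

/-- The defining properties of a two-color grid poset. -/
def IsTwoColorGridPoset (G : GridData P) : Prop :=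
  G.IsGridPoset ∧
  (∀ u v : P, G.chain u = G.chain v → G.color u = G.color v) ∧
  (∀ u v : P, Relation.ReflTransGen (fun x y : P => x ⋖ y ∨ y ⋖ x) u v →
    G.chain u = G.chain v + 1 → G.color u ≠ G.color v)

/-- The max property. -/
def MaxProperty (G : GridData P) : Prop :=
  (∀ u : P, IsMax u → G.chain u ≤ 2) ∧
  (∀ u v : P, IsMax u → IsMax v → u ≠ v → G.color u ≠ G.color v)

/-- The fiber `C i` of the chain function. -/
def fiber (G : GridData P) (i : ℕ) : Finset P :=
  Finset.univ.filter (fun u => G.chain u = i)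

/-- One step in a `γ`-component of `J_color(P)`: add or remove a single vertex of
color `γ` while both sets are order ideals. -/
def GStep (G : GridData P) (γ : Fin 2) (s t : Finset P) : Prop :=
  IsIdeal s ∧ IsIdeal t ∧ ∃ u : P, G.color u = γ ∧
    ((u ∉ s ∧ t = insert u s) ∨ (u ∉ t ∧ s = insert u t))

/-- The `γ`-component of `t` in `J_color(P)`. -/
def comp (G : GridData P) (γ : Fin 2) (t : Finset P) : Set (Finset P) :=
  {s | Relation.ReflTransGen (G.GStep γ) t s}

noncomputable def minCard (G : GridData P) (γ : Fin 2) (t : Finset P) : ℕ :=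
  sInf (Finset.card '' G.comp γ t)

noncomputable def maxCard (G : GridData P) (γ : Fin 2) (t : Finset P) : ℕ :=
  sSup (Finset.card '' G.comp γ t)

/-- `m_γ(t) = 2 ρ_γ(t) - l_γ(t)`. -/
noncomputable def mcoord (G : GridData P) (γ : Fin 2) (t : Finset P) : ℤ :=
  2 * ((t.card : ℤ) - (G.minCard γ t : ℤ)) - ((G.maxCard γ t : ℤ) - (G.minCard γ t : ℤ))

/-- The weight of an element of `J_color(P)` (color `0` is α, color `1` is β). -/
noncomputable def wt (G : GridData P) (t : Finset P) : Fin 2 → ℤ :=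
  ![G.mcoord 0 t, G.mcoord 1 t]

/-- `J_color(P)` is `M`-structured. -/
def MStructured (G : GridData P) (M : Matrix (Fin 2) (Fin 2) ℤ) : Prop :=
  ∀ s t : Finset P, IsIdeal s → IsIdeal t → ∀ u : P, u ∉ s → t = insert u s →
    G.wt s + M (G.color u) = G.wt t

end GridData

open Polynomial in
/-- The rank generating function of the lattice of order ideals of P. -/
noncomputable def RGF (P : Type) [PartialOrder P] [Fintype P] : Polynomial ℤ :=
  ∑ t ∈ Finset.univ.filter (fun t : Finset P => IsIdeal t), X ^ t.card

/-- A polynomial `a_0 + a_1 q + ⋯ + a_l q^l` is symmetric if `a_i = a_{l-i}`. -/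
def PolySymmetric (p : Polynomial ℤ) : Prop :=
  ∀ i ≤ p.natDegree, p.coeff i = p.coeff (p.natDegree - i)

/-- A polynomial is unimodal if its coefficients increase up to some index `k` and
decrease thereafter. -/
def PolyUnimodal (p : Polynomial ℤ) : Prop :=
  ∃ k, (∀ i j, i ≤ j → j ≤ k → p.coeff i ≤ p.coeff j) ∧
    (∀ i j, k ≤ i → i ≤ j → j ≤ p.natDegree → p.coeff j ≤ p.coeff i)

namespace Aux
set_option linter.unusedSectionVars false
open GridData Finset

variable {P : Type} [PartialOrder P] [Fintype P] (G : GridData P)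

lemma fin2_eq {x y z : Fin 2} (hx : x ≠ z) (hy : y ≠ z) : x = y := by
  fin_cases x <;> fin_cases y <;> fin_cases z <;> simp_all

lemma fin2_cases (c : Fin 2) : c = 0 ∨ c = 1 := by fin_cases c <;> simp

/-- the non-γ part of `s` -/
noncomputable def ncl (γ : Fin 2) (s : Finset P) : Finset P := s.filter (fun x => G.color x ≠ γ)

/-- the minimum of the γ-component of `s` : downward closure of the non-γ part. -/
noncomputable def low (γ : Fin 2) (s : Finset P) : Finset P :=
  univ.filter (fun x => ∃ z ∈ ncl G γ s, x ≤ z)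

/-- the maximum of the γ-component of `s`. -/
noncomputable def high (γ : Fin 2) (s : Finset P) : Finset P :=
  s ∪ univ.filter (fun x => G.color x = γ ∧ ∀ y : P, y ≤ x → G.color y ≠ γ → y ∈ s)

lemma ncl_subset_low {γ : Fin 2} {s : Finset P} : ncl G γ s ⊆ low G γ s := by
  intro x hx
  simp only [low, mem_filter, mem_univ, true_and]
  exact ⟨x, hx, le_rfl⟩

lemma low_subset {γ : Fin 2} {s : Finset P} (hs : IsIdeal s) : low G γ s ⊆ s := by
  intro x hx
  simp only [low, mem_filter, mem_univ, true_and] at hx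
  obtain ⟨z, hz, hxz⟩ := hx
  exact hs (mem_filter.mp hz).1 hxz

lemma low_ideal {γ : Fin 2} {s : Finset P} : IsIdeal (low G γ s) := by
  intro x hx y hy
  simp only [low, mem_filter, mem_univ, true_and] at hx ⊢
  obtain ⟨z, hz, hxz⟩ := hx
  exact ⟨z, hz, hy.trans hxz⟩

lemma ncl_insert {γ : Fin 2} {u : P} (hu : G.color u = γ) (s : Finset P) :
    ncl G γ (insert u s) = ncl G γ s := by
  simp [ncl, Finset.filter_insert, hu]

lemma step_ncl {γ : Fin 2} {s t : Finset P} (h : G.GStep γ s t) :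
    ncl G γ s = ncl G γ t := by
  obtain ⟨_, _, u, hu, ⟨hu1, h1⟩ | ⟨hu1, h1⟩⟩ := h
  · rw [h1, ncl_insert G hu]
  · rw [h1, ncl_insert G hu]

lemma comp_ncl {γ : Fin 2} {s r : Finset P} (h : r ∈ G.comp γ s) :
    ncl G γ r = ncl G γ s := by
  induction h with
  | refl => rfl
  | tail _ hstep ih => exact (step_ncl G hstep).symm.trans ih

lemma comp_ideal {γ : Fin 2} {s r : Finset P} (hs : IsIdeal s) (h : r ∈ G.comp γ s) :
    IsIdeal r := by
  induction h with
  | refl => exact hs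
  | tail _ hstep _ => exact hstep.2.1

lemma low_eq_of_ncl_eq {γ : Fin 2} {s t : Finset P} (h : ncl G γ s = ncl G γ t) :
    low G γ s = low G γ t := by
  simp [low, h]

lemma low_subset_of_mem {γ : Fin 2} {s r : Finset P} (hs : IsIdeal s) (h : r ∈ G.comp γ s) :
    low G γ s ⊆ r := by
  have hr := comp_ideal G hs h
  rw [low_eq_of_ncl_eq G (comp_ncl G h).symm]
  exact low_subset G hr

lemma subset_high_of_mem {γ : Fin 2} {s r : Finset P} (hs : IsIdeal s) (h : r ∈ G.comp γ s) :
    r ⊆ high G γ s := by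
  have hr := comp_ideal G hs h
  have hn := comp_ncl G h
  intro x hx
  by_cases hc : G.color x = γ
  · simp only [high, mem_union, mem_filter, mem_univ, true_and]
    refine Or.inr ⟨hc, fun y hy hyc => ?_⟩
    have : y ∈ ncl G γ r := mem_filter.mpr ⟨hr hx hy, hyc⟩
    rw [hn] at this
    exact (mem_filter.mp this).1
  · have : x ∈ ncl G γ r := mem_filter.mpr ⟨hx, hc⟩
    rw [hn] at this
    exact mem_union_left _ (mem_filter.mp this).1

lemma reach_low {γ : Fin 2} : ∀ (n : ℕ) (s : Finset P), (s \ low G γ s).card ≤ n →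
    IsIdeal s → low G γ s ∈ G.comp γ s := by
  intro n
  induction n with
  | zero =>
    intro s hcard hs
    have he : s \ low G γ s = ∅ := card_eq_zero.mp (Nat.le_zero.mp hcard)
    have hsub : s ⊆ low G γ s := sdiff_eq_empty_iff_subset.mp he
    rw [Finset.Subset.antisymm (low_subset G hs) hsub]
    exact Relation.ReflTransGen.refl
  | succ n ih =>
    intro s hcard hs
    by_cases hzero : s ⊆ low G γ s
    · rw [Finset.Subset.antisymm (low_subset G hs) hzero]
      exact Relation.ReflTransGen.refl
    · have hne : (s \ low G γ s).Nonempty := by rwa [sdiff_nonempty]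
      obtain ⟨x, hx, hmax⟩ : ∃ x ∈ s \ low G γ s, ∀ x' ∈ s \ low G γ s, ¬ x < x' := by
        obtain ⟨x, hx⟩ := Finset.exists_maximal hne
        exact ⟨x, hx.1, fun y hy hlt => hlt.not_ge (hx.2 hy hlt.le)⟩
      have hxs : x ∈ s := (mem_sdiff.mp hx).1
      have hxlow : x ∉ low G γ s := (mem_sdiff.mp hx).2
      have hcolor : G.color x = γ := by
        by_contra hc
        exact hxlow (ncl_subset_low G (mem_filter.mpr ⟨hxs, hc⟩))
      have hideal' : IsIdeal (s.erase x) := by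
        intro c hc y hy
        have hcs : c ∈ s := mem_of_mem_erase hc
        have hys : y ∈ s := hs hcs hy
        rw [mem_erase]
        refine ⟨fun hyx => ?_, hys⟩
        have hxc : x ≠ c := Ne.symm (ne_of_mem_erase hc)
        have hlt : x < c := lt_of_le_of_ne (hyx ▸ hy) hxc
        have hclow : c ∉ low G γ s := fun h => hxlow (low_ideal G h (hyx ▸ hy))
        exact hmax c (mem_sdiff.mpr ⟨hcs, hclow⟩) hlt
      have hstep : G.GStep γ s (s.erase x) :=
        ⟨hs, hideal', x, hcolor, Or.inr ⟨notMem_erase x s, (insert_erase hxs).symm⟩⟩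
      have hncl : ncl G γ (s.erase x) = ncl G γ s := by
        apply Finset.ext
        intro z
        simp only [ncl, mem_filter, mem_erase]
        constructor
        · rintro ⟨⟨_, hz⟩, hzc⟩; exact ⟨hz, hzc⟩
        · rintro ⟨hz, hzc⟩
          exact ⟨⟨fun h => hzc (h ▸ hcolor), hz⟩, hzc⟩
      have hlow' : low G γ (s.erase x) = low G γ s := low_eq_of_ncl_eq G hncl
      have hcard' : (s.erase x \ low G γ (s.erase x)).card ≤ n := by
        rw [hlow', Finset.erase_sdiff_comm, card_erase_of_mem hx]
        omega
      exact Relation.ReflTransGen.head hstep (hlow' ▸ ih (s.erase x) hcard' hideal')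

lemma reach_high {γ : Fin 2} : ∀ (n : ℕ) (s : Finset P), (high G γ s \ s).card ≤ n →
    IsIdeal s → high G γ s ∈ G.comp γ s := by
  intro n
  induction n with
  | zero =>
    intro s hcard hs
    have he : high G γ s \ s = ∅ := card_eq_zero.mp (Nat.le_zero.mp hcard)
    have hsub : high G γ s ⊆ s := sdiff_eq_empty_iff_subset.mp he
    rw [Finset.Subset.antisymm hsub subset_union_left]
    exact Relation.ReflTransGen.refl
  | succ n ih =>
    intro s hcard hs
    by_cases hzero : high G γ s ⊆ s
    · rw [Finset.Subset.antisymm hzero subset_union_left]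
      exact Relation.ReflTransGen.refl
    · have hne : (high G γ s \ s).Nonempty := by rwa [sdiff_nonempty]
      obtain ⟨x, hx, hmin⟩ : ∃ x ∈ high G γ s \ s, ∀ x' ∈ high G γ s \ s, ¬ x' < x := by
        obtain ⟨x, hx⟩ := Finset.exists_minimal hne
        exact ⟨x, hx.1, fun y hy hlt => hlt.not_ge (hx.2 hy hlt.le)⟩
      have hxh : x ∈ high G γ s := (mem_sdiff.mp hx).1
      have hxs : x ∉ s := (mem_sdiff.mp hx).2
      have hxf : G.color x = γ ∧ ∀ y : P, y ≤ x → G.color y ≠ γ → y ∈ s := by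
        rcases mem_union.mp hxh with h | h
        · exact absurd h hxs
        · exact (mem_filter.mp h).2
      have hideal' : IsIdeal (insert x s) := by
        intro c hc y hy
        rcases mem_insert.mp hc with rfl | hcs
        · rcases eq_or_lt_of_le hy with rfl | hlt
          · exact mem_insert_self _ _
          · by_cases hys : y ∈ s
            · exact mem_insert_of_mem hys
            · exfalso
              have hyc : G.color y = γ := by
                by_contra hnec
                exact hys (hxf.2 y hlt.le hnec)
              have hyhigh : y ∈ high G γ s := by
                refine mem_union_right _ (mem_filter.mpr ⟨mem_univ _, hyc, fun w hw hwc => ?_⟩)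
                exact hxf.2 w (hw.trans hlt.le) hwc
              exact hmin y (mem_sdiff.mpr ⟨hyhigh, hys⟩) hlt
        · exact mem_insert_of_mem (hs hcs hy)
      have hstep : G.GStep γ s (insert x s) :=
        ⟨hs, hideal', x, hxf.1, Or.inl ⟨hxs, rfl⟩⟩
      have hhigh' : high G γ (insert x s) = high G γ s := by
        have hfil : (univ.filter (fun z => G.color z = γ ∧ ∀ y : P, y ≤ z → G.color y ≠ γ → y ∈ insert x s))
            = univ.filter (fun z => G.color z = γ ∧ ∀ y : P, y ≤ z → G.color y ≠ γ → y ∈ s) := by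
          apply filter_congr
          intro z _
          constructor
          · rintro ⟨h1, h2⟩
            refine ⟨h1, fun y hy hyc => ?_⟩
            rcases mem_insert.mp (h2 y hy hyc) with rfl | h
            · exact absurd hxf.1 hyc
            · exact h
          · rintro ⟨h1, h2⟩
            exact ⟨h1, fun y hy hyc => mem_insert_of_mem (h2 y hy hyc)⟩
        show insert x s ∪ _ = high G γ s
        rw [hfil, Finset.insert_union]
        exact Finset.insert_eq_self.mpr hxh
      have hcard' : (high G γ (insert x s) \ insert x s).card ≤ n := by
        rw [hhigh']
        have : high G γ s \ insert x s = (high G γ s \ s).erase x := by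
          ext z
          simp only [mem_sdiff, mem_insert, mem_erase]
          tauto
        rw [this, card_erase_of_mem hx]
        omega
      exact Relation.ReflTransGen.head hstep (hhigh' ▸ ih (insert x s) hcard' hideal')

lemma minCard_eq {γ : Fin 2} {s : Finset P} (hs : IsIdeal s) :
    G.minCard γ s = (low G γ s).card := by
  apply le_antisymm
  · exact Nat.sInf_le ⟨low G γ s, reach_low G _ s le_rfl hs, rfl⟩
  · have hne : (Finset.card '' G.comp γ s).Nonempty := ⟨s.card, s, Relation.ReflTransGen.refl, rfl⟩
    apply le_csInf hne
    rintro n ⟨r, hr, rfl⟩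
    exact card_le_card (low_subset_of_mem G hs hr)

lemma maxCard_eq {γ : Fin 2} {s : Finset P} (hs : IsIdeal s) :
    G.maxCard γ s = (high G γ s).card := by
  have hbdd : BddAbove (Finset.card '' G.comp γ s) := by
    refine ⟨(high G γ s).card, ?_⟩
    rintro n ⟨r, hr, rfl⟩
    exact card_le_card (subset_high_of_mem G hs hr)
  apply le_antisymm
  · have hne : (Finset.card '' G.comp γ s).Nonempty := ⟨s.card, s, Relation.ReflTransGen.refl, rfl⟩
    apply csSup_le hne
    rintro n ⟨r, hr, rfl⟩
    exact card_le_card (subset_high_of_mem G hs hr)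
  · exact le_csSup hbdd ⟨high G γ s, reach_high G _ s le_rfl hs, rfl⟩

lemma mcoord_eq {γ : Fin 2} {s : Finset P} (hs : IsIdeal s) :
    G.mcoord γ s = 2 * (s.card : ℤ) - (low G γ s).card - (high G γ s).card := by
  rw [GridData.mcoord, minCard_eq G hs, maxCard_eq G hs]
  ring

lemma wt_apply (s : Finset P) (c : Fin 2) : G.wt s c = G.mcoord c s := by
  fin_cases c <;> simp [GridData.wt]

lemma M_offdiag {x y : Fin 2} (h : x ≠ y) :
    (!![2, 0; 0, 2] : Matrix (Fin 2) (Fin 2) ℤ) x y = 0 := by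
  fin_cases x <;> fin_cases y <;> simp_all

lemma color_eq_of_lt_aux (hM : G.MStructured !![2, 0; 0, 2]) :
    ∀ (n : ℕ) (u y : P), (univ.filter (· ≤ u)).card ≤ n → y < u →
      G.color y = G.color u := by
  intro n
  induction n with
  | zero =>
    intro u y hcard _
    exfalso
    have : u ∈ univ.filter (· ≤ u) := mem_filter.mpr ⟨mem_univ _, le_rfl⟩
    have := card_pos.mpr ⟨u, this⟩
    omega
  | succ n ih =>
    intro u y hcard hyu
    by_contra hne
    set γ := G.color u with hγ
    set γ' := G.color y with hγ'
    have hne' : γ' ≠ γ := fun h => hne h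
    set s := univ.filter (· < u) with hsdef
    have hs : IsIdeal s := by
      intro c hc z hz
      simp only [hsdef, mem_filter, mem_univ, true_and] at hc ⊢
      exact lt_of_le_of_lt hz hc
    have hus : u ∉ s := by simp [hsdef]
    have ht : IsIdeal (insert u s) := by
      intro c hc z hz
      rcases mem_insert.mp hc with rfl | hcs
      · rcases eq_or_lt_of_le hz with rfl | hlt
        · exact mem_insert_self _ _
        · exact mem_insert_of_mem (by simp [hsdef, hlt])
      · exact mem_insert_of_mem (hs hcs hz)
    have heq := congrFun (hM s (insert u s) hs ht u hus rfl) γ'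
    rw [Pi.add_apply, wt_apply, wt_apply, M_offdiag (Ne.symm hne')] at heq
    -- so mcoord γ' s = mcoord γ' (insert u s)
    have hys : y ∈ s := by simp [hsdef, hyu]
    -- y not in low γ' s
    have hy_lows : y ∉ low G γ' s := by
      intro h
      simp only [low, ncl, mem_filter, mem_univ, true_and] at h
      obtain ⟨z, ⟨hzs, hzc⟩, hyz⟩ := h
      have hzcol : G.color z = γ := fin2_eq hzc (Ne.symm hne')
      have hzu : z < u := by simpa [hsdef] using hzs
      have hyz' : y < z := lt_of_le_of_ne hyz (fun h => hne' (by rw [hγ', h, hzcol]))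
      have hcard' : (univ.filter (· ≤ z)).card ≤ n := by
        have hsub : univ.filter (· ≤ z) ⊆ (univ.filter (· ≤ u)).erase u := by
          intro w hw
          simp only [mem_filter, mem_univ, true_and] at hw
          rw [mem_erase]
          refine ⟨fun h => ?_, by simp [hw.trans hzu.le]⟩
          subst h
          exact absurd hw hzu.not_ge
        have := card_le_card hsub
        rw [card_erase_of_mem (show u ∈ univ.filter (· ≤ u) from mem_filter.mpr ⟨mem_univ _, le_rfl⟩)] at this
        omega
      exact hne' ((ih z y hcard' hyz').trans hzcol)
    have hu_lows : u ∉ low G γ' s := fun h => hus (low_subset G hs h)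
    have hlow_sub : insert u (insert y (low G γ' s)) ⊆ low G γ' (insert u s) := by
      have hu_ncl : u ∈ ncl G γ' (insert u s) :=
        mem_filter.mpr ⟨mem_insert_self _ _, Ne.symm hne'⟩
      intro w hw
      rcases mem_insert.mp hw with rfl | hw
      · exact ncl_subset_low G hu_ncl
      rcases mem_insert.mp hw with rfl | hw
      · exact mem_filter.mpr ⟨mem_univ _, u, hu_ncl, hyu.le⟩
      · apply low_ideal (γ := γ') (s := insert u s) G ?_ (le_refl w)
        simp only [low, ncl, mem_filter, mem_univ, true_and] at hw ⊢
        obtain ⟨z, ⟨hzs, hzc⟩, hwz⟩ := hw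
        exact ⟨z, ⟨mem_insert_of_mem hzs, hzc⟩, hwz⟩
    have hyu_ne : y ≠ u := ne_of_lt hyu
    have hlow_card : (low G γ' s).card + 2 ≤ (low G γ' (insert u s)).card := by
      have h1 := card_le_card hlow_sub
      rw [card_insert_of_notMem, card_insert_of_notMem hy_lows] at h1
      · omega
      · simp only [mem_insert]
        push_neg
        exact ⟨Ne.symm hyu_ne, hu_lows⟩
    have hhigh_sub : insert u (high G γ' s) ⊆ high G γ' (insert u s) := by
      intro w hw
      rcases mem_insert.mp hw with rfl | hw
      · exact mem_union_left _ (mem_insert_self _ _)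
      rcases mem_union.mp hw with h | h
      · exact mem_union_left _ (mem_insert_of_mem h)
      · refine mem_union_right _ ?_
        simp only [mem_filter, mem_univ, true_and] at h ⊢
        exact ⟨h.1, fun z hz hzc => mem_insert_of_mem (h.2 z hz hzc)⟩
    have hu_high : u ∉ high G γ' s := by
      intro h
      rcases mem_union.mp h with h | h
      · exact hus h
      · exact hne' ((mem_filter.mp h).2.1).symm
    have hhigh_card : (high G γ' s).card + 1 ≤ (high G γ' (insert u s)).card := by
      have h1 := card_le_card hhigh_sub
      rw [card_insert_of_notMem hu_high] at h1
      omega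
    have hms := mcoord_eq G (γ := γ') hs
    have hmt := mcoord_eq G (γ := γ') ht
    have hcardt : (insert u s).card = s.card + 1 := card_insert_of_notMem hus
    rw [hms, hmt, hcardt] at heq
    push_cast at heq
    omega

lemma color_eq_of_le (hM : G.MStructured !![2, 0; 0, 2]) {y u : P} (h : y ≤ u) :
    G.color y = G.color u := by
  rcases eq_or_lt_of_le h with rfl | hlt
  · rfl
  · exact color_eq_of_lt_aux G hM _ u y le_rfl hlt

lemma exists_covby_le {u v : P} (h : u < v) : ∃ w : P, u ⋖ w ∧ w ≤ v := by
  obtain ⟨w, hw, hmin⟩ : ∃ w ∈ univ.filter (fun w => u < w ∧ w ≤ v),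
      ∀ x' ∈ univ.filter (fun w => u < w ∧ w ≤ v), ¬ x' < w := by
    obtain ⟨w, hw⟩ :=
      Finset.exists_minimal (s := univ.filter (fun w => u < w ∧ w ≤ v)) ⟨v, by simp [h]⟩
    exact ⟨w, hw.1, fun y hy hlt => hlt.not_ge (hw.2 hy hlt.le)⟩
  simp only [mem_filter, mem_univ, true_and] at hw hmin
  refine ⟨w, ⟨hw.1, fun z hz1 hz2 => ?_⟩, hw.2⟩
  exact hmin z ⟨hz1, hz2.le.trans hw.2⟩ hz2

lemma chain_eq_of_covby (hG : G.IsTwoColorGridPoset) (hM : G.MStructured !![2, 0; 0, 2])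
    {u w : P} (hcov : u ⋖ w) : G.chain u = G.chain w := by
  rcases hG.1.2.2.2.2 u w hcov with h | h
  · exact h
  · exfalso
    have hcon : Relation.ReflTransGen (fun x y : P => x ⋖ y ∨ y ⋖ x) u w :=
      Relation.ReflTransGen.single (Or.inl hcov)
    exact hG.2.2 u w hcon h (color_eq_of_le G hM hcov.le)

lemma chain_eq_of_le (hG : G.IsTwoColorGridPoset) (hM : G.MStructured !![2, 0; 0, 2]) :
    ∀ (n : ℕ) (u v : P), (univ.filter (u ≤ ·)).card ≤ n → u ≤ v → G.chain u = G.chain v := by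
  intro n
  induction n with
  | zero =>
    intro u v hcard _
    exfalso
    have : u ∈ univ.filter (u ≤ ·) := mem_filter.mpr ⟨mem_univ _, le_rfl⟩
    have := card_pos.mpr ⟨u, this⟩
    omega
  | succ n ih =>
    intro u v hcard huv
    rcases eq_or_lt_of_le huv with rfl | hlt
    · rfl
    · obtain ⟨w, hcov, hwv⟩ := exists_covby_le hlt
      have h1 : G.chain u = G.chain w := chain_eq_of_covby G hG hM hcov
      have hcard' : (univ.filter (w ≤ ·)).card ≤ n := by
        have hsub : univ.filter (w ≤ ·) ⊆ (univ.filter (u ≤ ·)).erase u := by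
          intro z hz
          simp only [mem_filter, mem_univ, true_and] at hz
          rw [mem_erase]
          refine ⟨fun h => ?_, mem_filter.mpr ⟨mem_univ _, hcov.lt.le.trans hz⟩⟩
          subst h
          exact absurd hz hcov.lt.not_ge
        have := card_le_card hsub
        rw [card_erase_of_mem (show u ∈ univ.filter (u ≤ ·) from
          mem_filter.mpr ⟨mem_univ _, le_rfl⟩)] at this
        omega
      exact h1.trans (ih w v hcard' hwv)

lemma exists_max_above (x : P) : ∃ m : P, x ≤ m ∧ IsMax m := by
  obtain ⟨m, hm, hmax⟩ : ∃ m ∈ univ.filter (x ≤ ·), ∀ x' ∈ univ.filter (x ≤ ·), ¬ m < x' := by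
    obtain ⟨m, hm⟩ :=
      Finset.exists_maximal (s := univ.filter (x ≤ ·)) ⟨x, mem_filter.mpr ⟨mem_univ _, le_rfl⟩⟩
    exact ⟨m, hm.1, fun y hy hlt => hlt.not_ge (hm.2 hy hlt.le)⟩
  simp only [mem_filter, mem_univ, true_and] at hm hmax
  refine ⟨m, hm, fun c hc => ?_⟩
  rcases eq_or_lt_of_le hc with rfl | hlt
  · exact le_rfl
  · exact absurd hlt (hmax c (hm.trans hc))

lemma comparable_of_color_eq (hG : G.IsTwoColorGridPoset) (hmax : G.MaxProperty)
    (hM : G.MStructured !![2, 0; 0, 2]) {x y : P} (h : G.color x = G.color y) :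
    x ≤ y ∨ y ≤ x := by
  obtain ⟨mx, hxm, hmx⟩ := exists_max_above x
  obtain ⟨my, hym, hmy⟩ := exists_max_above y
  have hcx : G.color x = G.color mx := color_eq_of_le G hM hxm
  have hcy : G.color y = G.color my := color_eq_of_le G hM hym
  have hmm : mx = my := by
    by_contra hne
    exact hmax.2 mx my hmx hmy hne (by rw [← hcx, h, hcy])
  have h1 : G.chain x = G.chain mx := chain_eq_of_le G hG hM _ x mx le_rfl hxm
  have h2 : G.chain y = G.chain my := chain_eq_of_le G hG hM _ y my le_rfl hym
  exact hG.1.2.2.2.1 x y (by rw [h1, h2, hmm])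

/-- the color class of `c` -/
noncomputable def cls (c : Fin 2) : Finset P := univ.filter (fun x => G.color x = c)

lemma univ_ideal : IsIdeal (univ : Finset P) := fun _ _ y _ => mem_univ y

lemma low_univ (hM : G.MStructured !![2, 0; 0, 2]) (γ : Fin 2) :
    low G γ (univ : Finset P) = univ.filter (fun x => G.color x ≠ γ) := by
  ext x
  simp only [low, ncl, mem_filter, mem_univ, true_and]
  constructor
  · rintro ⟨z, hzc, hxz⟩
    rw [color_eq_of_le G hM hxz]
    exact hzc
  · intro h
    exact ⟨x, h, le_rfl⟩

lemma high_univ (γ : Fin 2) : high G γ (univ : Finset P) = univ :=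
  Finset.Subset.antisymm (subset_univ _) subset_union_left

lemma mcoord_univ (hM : G.MStructured !![2, 0; 0, 2]) (γ : Fin 2) :
    G.mcoord γ (univ : Finset P) = ((cls G γ).card : ℤ) := by
  rw [mcoord_eq G univ_ideal, low_univ G hM, high_univ]
  have hsplit : (univ.filter (fun x => G.color x = γ)).card
      + (univ.filter (fun x => ¬ G.color x = γ)).card = (univ : Finset P).card :=
    card_filter_add_card_filter_not _
  have h1 : cls G γ = univ.filter (fun x => G.color x = γ) := rfl
  have h2 : (univ.filter (fun x => G.color x ≠ γ)) = (univ.filter (fun x => ¬ G.color x = γ)) := rfl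
  rw [h1, h2]
  omega

lemma cls_closed (hM : G.MStructured !![2, 0; 0, 2]) {c : Fin 2} {x y : P}
    (hx : x ∈ cls G c) (hxy : y ≤ x) : y ∈ cls G c := by
  simp only [cls, mem_filter, mem_univ, true_and] at hx ⊢
  rw [color_eq_of_le G hM hxy]
  exact hx

lemma cls_chain (hG : G.IsTwoColorGridPoset) (hmax : G.MaxProperty)
    (hM : G.MStructured !![2, 0; 0, 2]) (c : Fin 2) :
    ∀ x ∈ cls G c, ∀ y ∈ cls G c, x ≤ y ∨ y ≤ x := by
  intro x hx y hy
  simp only [cls, mem_filter, mem_univ, true_and] at hx hy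
  exact comparable_of_color_eq G hG hmax hM (hx.trans hy.symm)

/-- the initial segment of cardinality `min k S.card` of a chain `S` -/
noncomputable def seg (S : Finset P) (k : ℕ) : Finset P :=
  S.filter (fun x => (S.filter (· ≤ x)).card ≤ k)

lemma rank_lt_rank {S : Finset P} {x y : P} (hy : y ∈ S) (hxy : x < y) :
    (S.filter (· ≤ x)).card < (S.filter (· ≤ y)).card := by
  apply card_lt_card
  rw [Finset.ssubset_iff_of_subset]
  · exact ⟨y, mem_filter.mpr ⟨hy, le_rfl⟩, fun h => absurd ((mem_filter.mp h).2) hxy.not_ge⟩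
  · intro z hz
    rw [mem_filter] at hz ⊢
    exact ⟨hz.1, hz.2.trans hxy.le⟩

lemma rank_injOn {S : Finset P} (hchain : ∀ x ∈ S, ∀ y ∈ S, x ≤ y ∨ y ≤ x) :
    Set.InjOn (fun x => (S.filter (· ≤ x)).card) S := by
  intro x hx y hy heq
  by_contra hne
  rcases hchain x hx y hy with h | h
  · exact absurd heq (Nat.ne_of_lt (rank_lt_rank hy (lt_of_le_of_ne h hne)))
  · exact absurd heq.symm (Nat.ne_of_lt (rank_lt_rank hx (lt_of_le_of_ne h (Ne.symm hne))))

lemma rank_image {S : Finset P} (hchain : ∀ x ∈ S, ∀ y ∈ S, x ≤ y ∨ y ≤ x) :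
    S.image (fun x => (S.filter (· ≤ x)).card) = Finset.Icc 1 S.card := by
  apply Finset.eq_of_subset_of_card_le
  · intro n hn
    simp only [mem_image] at hn
    obtain ⟨x, hx, rfl⟩ := hn
    rw [Finset.mem_Icc]
    constructor
    · exact card_pos.mpr ⟨x, mem_filter.mpr ⟨hx, le_rfl⟩⟩
    · exact card_le_card (filter_subset _ _)
  · rw [Nat.card_Icc, Finset.card_image_of_injOn (rank_injOn hchain)]
    omega

lemma seg_card {S : Finset P} (hchain : ∀ x ∈ S, ∀ y ∈ S, x ≤ y ∨ y ≤ x) (k : ℕ) :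
    (seg S k).card = min k S.card := by
  have h1 : ((S.image (fun x => (S.filter (· ≤ x)).card)).filter (· ≤ k)).card
      = (seg S k).card := by
    rw [Finset.filter_image]
    exact Finset.card_image_of_injOn (Set.InjOn.mono (fun z hz => (mem_filter.mp hz).1)
      (rank_injOn hchain))
  rw [← h1, rank_image hchain]
  have h2 : (Finset.Icc 1 S.card).filter (· ≤ k) = Finset.Icc 1 (min S.card k) := by
    ext n
    simp only [mem_filter, Finset.mem_Icc]
    omega
  rw [h2, Nat.card_Icc]
  omega

lemma seg_ideal (hM : G.MStructured !![2, 0; 0, 2]) (c : Fin 2) (k : ℕ) {x y : P}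
    (hx : x ∈ seg (cls G c) k) (hxy : y ≤ x) : y ∈ seg (cls G c) k := by
  simp only [seg, mem_filter] at hx ⊢
  refine ⟨cls_closed G hM hx.1 hxy, le_trans (card_le_card ?_) hx.2⟩
  intro z hz
  rw [mem_filter] at hz ⊢
  exact ⟨hz.1, hz.2.trans hxy⟩

lemma seg_subset (S : Finset P) (k : ℕ) : seg S k ⊆ S := filter_subset _ _

lemma cls_disjoint : Disjoint (cls G 0) (cls G 1) := by
  rw [Finset.disjoint_left]
  intro x hx hx'
  simp only [cls, mem_filter, mem_univ, true_and] at hx hx'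
  rw [hx] at hx'
  exact absurd hx' (by decide)

lemma cls_union : cls G 0 ∪ cls G 1 = (univ : Finset P) := by
  ext x
  simp only [cls, mem_union, mem_filter, mem_univ, true_and, iff_true]
  exact fin2_cases (G.color x)

lemma inter_cls_card {t : Finset P} :
    (t ∩ cls G 0).card + (t ∩ cls G 1).card = t.card := by
  rw [← card_union_of_disjoint (Finset.disjoint_of_subset_left inter_subset_right
    (Finset.disjoint_of_subset_right inter_subset_right (cls_disjoint G)))]
  congr 1
  rw [← Finset.inter_union_distrib_left, cls_union, inter_univ]

lemma ideal_inter_cls {t : Finset P} (hG : G.IsTwoColorGridPoset) (hmax : G.MaxProperty)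
    (hM : G.MStructured !![2, 0; 0, 2]) (ht : IsIdeal t) (c : Fin 2) :
    t ∩ cls G c = seg (cls G c) ((t ∩ cls G c).card) := by
  apply Finset.eq_of_subset_of_card_le
  · intro x hx
    simp only [seg, mem_filter]
    refine ⟨(mem_inter.mp hx).2, card_le_card ?_⟩
    intro z hz
    rw [mem_filter] at hz
    exact mem_inter.mpr ⟨ht (mem_inter.mp hx).1 hz.2, hz.1⟩
  · rw [seg_card (cls_chain G hG hmax hM c)]
    exact le_trans (Nat.min_le_left _ _) le_rfl

open Polynomial in
lemma RGF_eq (hG : G.IsTwoColorGridPoset) (hmax : G.MaxProperty)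
    (hM : G.MStructured !![2, 0; 0, 2]) :
    RGF P = (∑ k ∈ Finset.range ((cls G 0).card + 1), (X : ℤ[X]) ^ k)
      * (∑ l ∈ Finset.range ((cls G 1).card + 1), (X : ℤ[X]) ^ l) := by
  rw [RGF, Finset.sum_mul_sum, ← Finset.sum_product']
  apply Finset.sum_nbij' (i := fun t => ((t ∩ cls G 0).card, (t ∩ cls G 1).card))
    (j := fun p => seg (cls G 0) p.1 ∪ seg (cls G 1) p.2)
  · intro t ht
    simp only [Finset.mem_product, Finset.mem_range]
    constructor
    · exact Nat.lt_succ_of_le (card_le_card inter_subset_right)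
    · exact Nat.lt_succ_of_le (card_le_card inter_subset_right)
  · intro p hp
    simp only [Finset.mem_product, Finset.mem_range] at hp
    rw [mem_filter]
    refine ⟨mem_univ _, ?_⟩
    intro x hx y hy
    rcases mem_union.mp hx with h | h
    · exact mem_union_left _ (seg_ideal G hM 0 p.1 h hy)
    · exact mem_union_right _ (seg_ideal G hM 1 p.2 h hy)
  · intro t ht
    rw [mem_filter] at ht
    rw [← ideal_inter_cls G hG hmax hM ht.2 0, ← ideal_inter_cls G hG hmax hM ht.2 1]
    rw [← Finset.inter_union_distrib_left, cls_union, inter_univ]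
  · intro p hp
    simp only [Finset.mem_product, Finset.mem_range] at hp
    have h0 : (seg (cls G 0) p.1 ∪ seg (cls G 1) p.2) ∩ cls G 0 = seg (cls G 0) p.1 := by
      rw [Finset.union_inter_distrib_right]
      rw [Finset.inter_eq_left.mpr (seg_subset _ _)]
      have : seg (cls G 1) p.2 ∩ cls G 0 = ∅ := by
        apply Finset.eq_empty_of_forall_notMem
        intro x hx
        rw [mem_inter] at hx
        exact Finset.disjoint_left.mp (cls_disjoint G) hx.2 (seg_subset _ _ hx.1)
      rw [this, union_empty]
    have h1 : (seg (cls G 0) p.1 ∪ seg (cls G 1) p.2) ∩ cls G 1 = seg (cls G 1) p.2 := by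
      rw [Finset.union_inter_distrib_right]
      rw [Finset.inter_eq_left.mpr (seg_subset _ _)]
      have : seg (cls G 0) p.1 ∩ cls G 1 = ∅ := by
        apply Finset.eq_empty_of_forall_notMem
        intro x hx
        rw [mem_inter] at hx
        exact Finset.disjoint_left.mp (cls_disjoint G) (seg_subset _ _ hx.1) hx.2
      rw [this, empty_union]
    rw [h0, h1]
    rw [seg_card (cls_chain G hG hmax hM 0), seg_card (cls_chain G hG hmax hM 1)]
    ext <;> simp <;> omega
  · intro t ht
    rw [← pow_add, ← inter_cls_card G]

open Polynomial

noncomputable def gp (n : ℕ) : ℤ[X] := ∑ k ∈ Finset.range (n + 1), X ^ k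

lemma gp_mul (n : ℕ) : gp n * (1 - X) = 1 - X ^ (n + 1) := by
  have h := geom_sum_mul (X : ℤ[X]) (n + 1)
  unfold gp
  linear_combination -h

lemma gp_coeff (n i : ℕ) : (gp n).coeff i = if i ≤ n then 1 else 0 := by
  unfold gp
  rw [finset_sum_coeff]
  simp only [coeff_X_pow]
  rw [Finset.sum_ite_eq (Finset.range (n + 1)) i (fun _ => (1 : ℤ))]
  simp [Nat.lt_succ_iff]

lemma gp_ne_zero (n : ℕ) : gp n ≠ 0 := fun h => by
  have := gp_coeff n 0
  rw [h] at this
  simp at this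

lemma gp_natDegree (n : ℕ) : (gp n).natDegree = n := by
  apply le_antisymm
  · apply Polynomial.natDegree_le_iff_coeff_eq_zero.mpr
    intro m hm
    rw [gp_coeff, if_neg (by omega)]
  · apply Polynomial.le_natDegree_of_ne_zero
    rw [gp_coeff]
    simp

/-- the number of lattice points giving coefficient `i` -/
def cnt (a b i : ℕ) : ℕ :=
  ((Finset.range (a + 1) ×ˢ Finset.range (b + 1)).filter (fun p => p.1 + p.2 = i)).card

lemma coeff_gp_gp (a b i : ℕ) : (gp a * gp b).coeff i = (cnt a b i : ℤ) := by
  have hexp : gp a * gp b = ∑ p ∈ Finset.range (a + 1) ×ˢ Finset.range (b + 1),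
      (X : ℤ[X]) ^ (p.1 + p.2) := by
    unfold gp
    rw [Finset.sum_mul_sum, ← Finset.sum_product']
    refine Finset.sum_congr rfl fun p _ => ?_
    rw [pow_add]
  rw [hexp, finset_sum_coeff]
  simp only [coeff_X_pow]
  rw [cnt, ← Finset.sum_boole]
  refine Finset.sum_congr rfl fun p _ => ?_
  simp [eq_comm]

lemma cnt_eq (a b i : ℕ) : cnt a b i = min i a + 1 - (i - b) := by
  rw [cnt, ← Nat.card_Icc (i - b) (min i a)]
  apply Finset.card_nbij' (i := fun p => p.1) (j := fun k => (k, i - k))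
  · intro p hp
    simp only [Finset.mem_coe, Finset.mem_filter, Finset.mem_product, Finset.mem_range] at hp
    rw [Finset.mem_coe, Finset.mem_Icc]
    dsimp only
    omega
  · intro k hk
    rw [Finset.mem_coe, Finset.mem_Icc] at hk
    simp only [Finset.mem_coe, Finset.mem_filter, Finset.mem_product, Finset.mem_range]
    omega
  · intro p hp
    simp only [Finset.mem_coe, Finset.mem_filter, Finset.mem_product, Finset.mem_range] at hp
    ext
    · rfl
    · simp only []
      omega
  · intro k hk
    rfl

lemma gpgp_natDegree (a b : ℕ) : (gp a * gp b).natDegree = a + b := by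
  rw [Polynomial.natDegree_mul (gp_ne_zero a) (gp_ne_zero b), gp_natDegree, gp_natDegree]

end Aux

open Polynomial in
theorem stmt_4 {P : Type} [PartialOrder P] [Fintype P] (G : GridData P)
    (hG : G.IsTwoColorGridPoset) (hmax : G.MaxProperty)
    (hM : G.MStructured !![2, 0; 0, 2])
    (a b : ℤ) (ha : a = G.wt Finset.univ 0) (hb : b = G.wt Finset.univ 1) :
    0 ≤ a ∧ 0 ≤ b ∧ PolySymmetric (RGF P) ∧ PolyUnimodal (RGF P) ∧
      RGF P * ((1 : ℤ[X]) - X) * (1 - X) = ((1 : ℤ[X]) - X ^ (a + 1).toNat) * (1 - X ^ (b + 1).toNat) := by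
  classical
  have ha' : a = ((Aux.cls G 0).card : ℤ) := by
    rw [ha, Aux.wt_apply, Aux.mcoord_univ G hM]
  have hb' : b = ((Aux.cls G 1).card : ℤ) := by
    rw [hb, Aux.wt_apply, Aux.mcoord_univ G hM]
  set m := (Aux.cls G 0).card with hm
  set n := (Aux.cls G 1).card with hn
  have hRGF : RGF P = Aux.gp m * Aux.gp n := by
    rw [Aux.RGF_eq G hG hmax hM]; rfl
  have hdeg : (RGF P).natDegree = m + n := by rw [hRGF, Aux.gpgp_natDegree]
  refine ⟨by rw [ha']; exact Int.natCast_nonneg _, by rw [hb']; exact Int.natCast_nonneg _,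
    ?_, ?_, ?_⟩
  · intro i hi
    rw [hdeg] at hi ⊢
    rw [hRGF, Aux.coeff_gp_gp, Aux.coeff_gp_gp]
    congr 1
    rw [Aux.cnt_eq, Aux.cnt_eq]
    omega
  · refine ⟨min m n, fun i j hij hjk => ?_, fun i j hki hij hjd => ?_⟩
    · rw [hRGF, Aux.coeff_gp_gp, Aux.coeff_gp_gp]
      have : Aux.cnt m n i ≤ Aux.cnt m n j := by
        rw [Aux.cnt_eq, Aux.cnt_eq]
        omega
      exact_mod_cast this
    · rw [hdeg] at hjd
      rw [hRGF, Aux.coeff_gp_gp, Aux.coeff_gp_gp]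
      have : Aux.cnt m n j ≤ Aux.cnt m n i := by
        rw [Aux.cnt_eq, Aux.cnt_eq]
        omega
      exact_mod_cast this
  · have hta : (a + 1).toNat = m + 1 := by rw [ha']; omega
    have htb : (b + 1).toNat = n + 1 := by rw [hb']; omega
    rw [hRGF, hta, htb, ← Aux.gp_mul, ← Aux.gp_mul]
    ring
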